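/- Let E be a finite set of equations and θ, φ ∈ imgu(E). Then: (1) for every M ⊆ U, M models θ iff M models φ; (2) α_Sh(θ) = α_Sh(φ); (3) for every x ∈ U, θ(x) is a variable iff φ(x) is a variable; (4) for every x ∈ U, χ(θ(x)) ≤ 1 iff χ(φ(x)) ≤ 1. -/
import Mathlib


open scoped Classical

namespace SharingPaper

/-- Finite first-order terms over an arity-indexed alphabet `F`, with
variables drawn from the countably infinite set `ℕ` (playing the role of `U`). -/
inductive Term (F : ℕ → Type) : Type
  | var : ℕ → Term F
  | app : (n : ℕ) → F n → (Fin n → Term F) → Term F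

namespace Term

variable {F : ℕ → Type}

/-- The set `var(t)` of variables occurring in a term. -/
def vars : Term F → Set ℕ
  | var x => {x}
  | app n _ ts => ⋃ i : Fin n, vars (ts i)

/-- Number of occurrences of the variable `x` in a term. -/
def count (x : ℕ) : Term F → ℕ
  | var y => if y = x then 1 else 0
  | app n _ ts => ∑ i : Fin n, count x (ts i)

/-- `χ(x, t) = min(2, number of occurrences of x in t)`. -/
def chiVar (x : ℕ) (t : Term F) : ℕ := min 2 (t.count x)

/-- `χ(t) = max {χ(x, t) | x ∈ U}`. -/
noncomputable def mult (t : Term F) : ℕ := sSup (Set.range fun x => chiVar x t)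

end Term

variable {F : ℕ → Type}

/-- Substitutions, represented as maps from variables to terms. -/
abbrev Subst (F : ℕ → Type) := ℕ → Term F

namespace Subst

/-- Homomorphic extension of a substitution to terms. -/
def apply (θ : Subst F) : Term F → Term F
  | .var x => θ x
  | .app n f ts => .app n f fun i => apply θ (ts i)

/-- `dom(θ) = {u | θ(u) ≠ u}`. -/
def dom (θ : Subst F) : Set ℕ := {x | θ x ≠ .var x}

/-- `rng(θ) = ∪ {var(θ(u)) | u ∈ dom(θ)}`. -/
def rng (θ : Subst F) : Set ℕ := ⋃ x ∈ dom θ, (θ x).vars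

/-- A genuine substitution has a finite domain. -/
def IsSubst (θ : Subst F) : Prop := (dom θ).Finite

/-- Composition: `(θ ∘ ψ)(u) = θ(ψ(u))`. -/
def comp (θ ψ : Subst F) : Subst F := fun x => θ.apply (ψ x)

/-- `θ` is idempotent iff `dom(θ) ∩ rng(θ) = ∅`. -/
def Idempotent (θ : Subst F) : Prop := dom θ ∩ rng θ = ∅

/-- `θ ≤ ψ` iff `ψ = δ ∘ θ` for some substitution `δ`. -/
def Le (θ ψ : Subst F) : Prop := ∃ δ : Subst F, IsSubst δ ∧ ψ = comp δ θ

/-- `occ(θ, y) = {u ∈ U | y ∈ var(θ(u))}`. -/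
def occ (θ : Subst F) (y : ℕ) : Set ℕ := {u | y ∈ (θ u).vars}

/-- `α_Sh(θ) = {occ(θ, u) ∩ X | u ∈ U}`. -/
def alphaSh (X : Set ℕ) (θ : Subst F) : Set (Set ℕ) :=
  Set.range fun u => occ θ u ∩ X

/-- An assignment `M ⊆ U` models `θ` iff for every `x ↦ t ∈ θ`, `x ∈ M ↔ var(t) ⊆ M`. -/
def Models (M : Set ℕ) (θ : Subst F) : Prop :=
  ∀ x ∈ dom θ, (x ∈ M ↔ (θ x).vars ⊆ M)

/-- `θ` satisfies a Pos abstraction `f` over `X` iff `M ∩ X ∈ f` for every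
assignment `M` that models `θ`. -/
def Satisfies (X : Set ℕ) (θ : Subst F) (f : Set (Set ℕ)) : Prop :=
  ∀ M : Set ℕ, Models M θ → M ∩ X ∈ f

end Subst

/-- The set of unifiers of a set of equations. -/
def unif (E : Set (Term F × Term F)) : Set (Subst F) :=
  {θ | Subst.IsSubst θ ∧ ∀ p ∈ E, θ.apply p.1 = θ.apply p.2}

/-- Most general unifiers. -/
def mgu (E : Set (Term F × Term F)) : Set (Subst F) :=
  {θ ∈ unif E | ∀ ψ ∈ unif E, Subst.Le θ ψ}

/-- Idempotent most general unifiers. -/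
def imgu (E : Set (Term F × Term F)) : Set (Subst F) :=
  {θ ∈ mgu E | Subst.Idempotent θ}

/-- `γ_Sh(S)`. -/
def gammaSh (X : Set ℕ) (S : Set (Set ℕ)) : Set (Set (Term F × Term F)) :=
  {E | E.Finite ∧ ∃ θ ∈ imgu E, Subst.alphaSh X θ ⊆ S}

/-- `γ_Fr(F)`. -/
def gammaFr (Fv : Set ℕ) : Set (Set (Term F × Term F)) :=
  {E | E.Finite ∧ ∃ θ ∈ imgu E, ∀ x ∈ Fv, ∃ y, θ x = Term.var y}

/-- `γ_Lin(L)`. -/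
def gammaLin (L : Set ℕ) : Set (Set (Term F × Term F)) :=
  {E | E.Finite ∧ ∃ θ ∈ imgu E, ∀ x ∈ L, (θ x).mult ≤ 1}

/-- `γ_Pos(f)`. -/
def gammaPos (X : Set ℕ) (f : Set (Set ℕ)) : Set (Set (Term F × Term F)) :=
  {E | E.Finite ∧ ∃ θ ∈ imgu E, Subst.Satisfies X θ f}

/-- `γ_SFL(S, F, L)`. -/
def gammaSFL (X : Set ℕ) (S : Set (Set ℕ)) (Fv L : Set ℕ) :
    Set (Set (Term F × Term F)) :=
  gammaSh X S ∩ gammaFr Fv ∩ gammaLin L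

/-- `var(S) = ∪ {G | G ∈ S}`. -/
def varS {α : Type*} (S : Set (Set α)) : Set α := ⋃ G ∈ S, G

/-- `rel(t, S) = {G ∈ S | var(t) ∩ G ≠ ∅}`. -/
def rel (t : Term F) (S : Set (Set ℕ)) : Set (Set ℕ) :=
  {G ∈ S | t.vars ∩ G ≠ ∅}

/-- Closure `S*`: the least superset of `S` closed under binary unions. -/
def closure {α : Type*} (S : Set (Set α)) : Set (Set α) :=
  ⋂₀ {S' | S ⊆ S' ∧ ∀ G1 ∈ S', ∀ G2 ∈ S', G1 ∪ G2 ∈ S'}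

/-- Pairwise union `S1 ⊎ S2`. -/
def pairUnion {α : Type*} (S1 S2 : Set (Set α)) : Set (Set α) :=
  {G | ∃ G1 ∈ S1, ∃ G2 ∈ S2, G = G1 ∪ G2}

/-- `S^{*F}`: the least superset `S'` of `S` such that `G1 ∪ G2 ∈ S'` whenever
`G1, G2 ∈ S'` and `G1 ∩ G2 ∩ F = ∅`. -/
def closureF {α : Type*} (Fv : Set α) (S : Set (Set α)) : Set (Set α) :=
  ⋂₀ {S' | S ⊆ S' ∧ ∀ G1 ∈ S', ∀ G2 ∈ S', G1 ∩ G2 ∩ Fv = ∅ → G1 ∪ G2 ∈ S'}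

/-- `S1 ⊎_F S2`. -/
def pairUnionF {α : Type*} (Fv : Set α) (S1 S2 : Set (Set α)) : Set (Set α) :=
  {G | ∃ G1 ∈ S1, ∃ G2 ∈ S2, (G1 ≠ G2 → G1 ∩ G2 ∩ Fv = ∅) ∧ G = G1 ∪ G2}

/-- The Filé decomposition `K_F(S)`. -/
def KF {α : Type*} (Fv : Set α) (S : Set (Set α)) : Set (Set (Set α)) :=
  {B | B ⊆ S ∧ Fv ⊆ varS B ∧
    ∀ G1 ∈ B, ∀ G2 ∈ B, G1 ≠ G2 → G1 ∩ G2 ∩ Fv = ∅}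

/-- Abstract multiplicity `χ(t, S, L)`. -/
noncomputable def chiA (t : Term F) (S : Set (Set ℕ)) (L : Set ℕ) : ℕ :=
  if (∃ x ∈ varS S, Term.chiVar x t = 2) ∨
     (∃ x ∈ varS S, x ∈ t.vars \ L) ∨
     (∃ G ∈ S, ∃ x ∈ t.vars, ∃ y ∈ t.vars, x ≠ y ∧ x ∈ G ∧ y ∈ G)
  then 2 else 1

/-- The term `t` is a variable belonging to the freeness set `Fv` ("t ∈ F"). -/
def IsFreeTerm (t : Term F) (Fv : Set ℕ) : Prop := ∃ x ∈ Fv, t = Term.var x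

/-- The term `t` is a variable ("t ∈ U"). -/
def IsVarTerm (t : Term F) : Prop := ∃ x, t = Term.var x


section Aux

lemma vars_apply (σ : Subst F) (t : Term F) :
    (σ.apply t).vars = ⋃ y ∈ t.vars, (σ y).vars := by
  induction t with
  | var x => simp [Subst.apply, Term.vars]
  | app n f ts ih =>
      simp only [Subst.apply, Term.vars]
      ext z
      simp only [Set.mem_iUnion, ih]
      tauto

lemma count_eq_zero (t : Term F) : ∀ x, x ∉ t.vars → t.count x = 0 := by
  induction t with
  | var y =>
      intro x hx
      simp only [Term.vars, Set.mem_singleton_iff] at hx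
      simp [Term.count, Ne.symm hx]
  | app n f ts ih =>
      intro x hx
      simp only [Term.vars, Set.mem_iUnion, not_exists] at hx
      simp only [Term.count]
      exact Finset.sum_eq_zero fun i _ => ih i x (hx i)

lemma count_le_count_apply (σ : Subst F) (ρ : ℕ → ℕ) (t : Term F) :
    (∀ y ∈ t.vars, σ y = .var (ρ y)) → ∀ z, t.count z ≤ (σ.apply t).count (ρ z) := by
  induction t with
  | var y =>
      intro h z
      have hy : σ.apply (.var y) = Term.var (ρ y) := h y (by simp [Term.vars])
      rw [hy]
      simp only [Term.count]
      by_cases hz : y = z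
      · subst hz; simp
      · simp [hz]
  | app n f ts ih =>
      intro h z
      simp only [Term.count, Subst.apply]
      exact Finset.sum_le_sum fun i _ =>
        ih i (fun y hy => h y (Set.mem_iUnion.2 ⟨i, hy⟩)) z

lemma apply_eq_var {σ : Subst F} {t : Term F} {y : ℕ} (h : σ.apply t = .var y) :
    ∃ z, t = .var z ∧ σ z = .var y := by
  cases t with
  | var z => exact ⟨z, rfl, h⟩
  | app n f ts => simp [Subst.apply] at h

lemma mult_le_one_iff (t : Term F) : t.mult ≤ 1 ↔ ∀ x, t.count x ≤ 1 := by
  have hbdd : BddAbove (Set.range fun x => Term.chiVar x t) := by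
    refine ⟨2, ?_⟩
    rintro y ⟨x, rfl⟩
    simp only [Term.chiVar]
    omega
  rw [Term.mult, csSup_le_iff hbdd (Set.range_nonempty _)]
  constructor
  · intro h x
    have := h _ ⟨x, rfl⟩
    simp only [Term.chiVar] at this
    omega
  · rintro h y ⟨x, rfl⟩
    have := h x
    simp only [Term.chiVar]
    omega

lemma notMem_vars_of_mem_dom {ψ : Subst F} (hi : ψ.Idempotent) {u : ℕ}
    (hu : u ∈ ψ.dom) (x : ℕ) : u ∉ (ψ x).vars := by
  intro hmem
  by_cases hx : x ∈ ψ.dom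
  · have : u ∈ ψ.dom ∩ ψ.rng := ⟨hu, Set.mem_biUnion hx hmem⟩
    rw [hi] at this
    exact this
  · have hxx : ψ x = .var x := not_not.mp hx
    rw [hxx] at hmem
    simp only [Term.vars, Set.mem_singleton_iff] at hmem
    exact hx (hmem ▸ hu)

lemma models_iff (M : Set ℕ) (θ : Subst F) :
    Subst.Models M θ ↔ ∀ x, (x ∈ M ↔ (θ x).vars ⊆ M) := by
  constructor
  · intro h x
    by_cases hx : x ∈ θ.dom
    · exact h x hx
    · have hxx : θ x = .var x := not_not.mp hx
      rw [hxx]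
      simp [Term.vars]
  · intro h x _
    exact h x

lemma key (X : Set ℕ) (θ φ δ δ' : Subst F)
    (hθi : θ.Idempotent) (hφi : φ.Idempotent)
    (hφθ : ∀ x, φ x = δ.apply (θ x)) (hθφ : ∀ x, θ x = δ'.apply (φ x)) :
    (∀ M, Subst.Models M θ → Subst.Models M φ) ∧
    Subst.alphaSh X θ ⊆ Subst.alphaSh X φ ∧
    (∀ x, (∃ y, θ x = Term.var y) → ∃ z, φ x = Term.var z) ∧
    (∀ x, (φ x).mult ≤ 1 → (θ x).mult ≤ 1) := by
  have hrel : ∀ x y, y ∈ (θ x).vars → y ∉ θ.dom :=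
    fun x y hy hd => notMem_vars_of_mem_dom hθi hd x hy
  have hrelφ : ∀ x z, z ∈ (φ x).vars → z ∉ φ.dom :=
    fun x z hz hd => notMem_vars_of_mem_dom hφi hd x hz
  have fact1 : ∀ y ∉ θ.dom, δ'.apply (δ y) = Term.var y := by
    intro y hy
    have h1 : θ y = .var y := not_not.mp hy
    have h2 := hθφ y
    rw [hφθ y, h1] at h2
    exact h2.symm
  have fact2 : ∀ y, ∃ z, y ∉ θ.dom → δ y = .var z ∧ δ' z = .var y := by
    intro y
    by_cases hy : y ∉ θ.dom
    · obtain ⟨z, hz1, hz2⟩ := apply_eq_var (fact1 y hy)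
      have : δ y = .var z := hz1
      exact ⟨z, fun _ => ⟨this, hz2⟩⟩
    · exact ⟨0, fun h => absurd h hy⟩
  choose r hr using fact2
  have hr1 : ∀ y ∉ θ.dom, δ y = .var (r y) := fun y hy => (hr y hy).1
  have hr2 : ∀ y ∉ θ.dom, δ' (r y) = .var y := fun y hy => (hr y hy).2
  have hvars : ∀ x, (φ x).vars = r '' (θ x).vars := by
    intro x
    rw [hφθ x, vars_apply]
    ext z
    simp only [Set.mem_iUnion, Set.mem_image, exists_prop]
    constructor
    · rintro ⟨y, hy, hz⟩
      rw [hr1 y (hrel x y hy)] at hz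
      simp only [Term.vars, Set.mem_singleton_iff] at hz
      exact ⟨y, hy, hz.symm⟩
    · rintro ⟨y, hy, rfl⟩
      refine ⟨y, hy, ?_⟩
      rw [hr1 y (hrel x y hy)]
      simp [Term.vars]
  have fact3 : ∀ y ∉ θ.dom, θ (r y) = .var y := by
    intro y hy
    have hφy : φ y = .var (r y) := by
      have h := hφθ y
      rw [not_not.mp hy] at h
      rw [h]
      exact hr1 y hy
    have h1 : r y ∉ φ.dom :=
      hrelφ y (r y) (by rw [hφy]; simp [Term.vars])
    have h2 : φ (r y) = .var (r y) := not_not.mp h1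
    have h3 := hθφ (r y)
    rw [h2] at h3
    rw [h3]
    exact hr2 y hy
  have hinj : ∀ y₁ ∉ θ.dom, ∀ y₂ ∉ θ.dom, r y₁ = r y₂ → y₁ = y₂ := by
    intro y₁ h₁ y₂ h₂ he
    have h := hr2 y₁ h₁
    rw [he, hr2 y₂ h₂] at h
    injection h with h
    exact h.symm
  refine ⟨?_, ?_, ?_, ?_⟩
  · -- models
    intro M hM
    rw [models_iff] at hM ⊢
    intro x
    have hx := hM x
    rw [hvars x]
    constructor
    · intro hxM z hz
      obtain ⟨y, hy, rfl⟩ := hz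
      have hyd := hrel x y hy
      have hiff := hM (r y)
      rw [fact3 y hyd] at hiff
      refine hiff.mpr ?_
      intro w hw
      simp only [Term.vars, Set.mem_singleton_iff] at hw
      exact hw ▸ hx.mp hxM hy
    · intro himg
      refine hx.mpr ?_
      intro y hy
      have hyd := hrel x y hy
      have hryM : r y ∈ M := himg ⟨y, hy, rfl⟩
      have hiff := hM (r y)
      rw [fact3 y hyd] at hiff
      exact hiff.mp hryM (by simp [Term.vars])
  · -- alphaSh
    intro s hs
    obtain ⟨u, rfl⟩ := hs
    by_cases hu : u ∈ θ.dom
    · have hempty : Subst.occ θ u = ∅ := by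
        ext x
        simp only [Subst.occ, Set.mem_setOf_eq, Set.mem_empty_iff_false, iff_false]
        exact fun h => hrel x u h hu
      have hφdom : φ.dom.Nonempty := by
        by_contra hc
        rw [Set.not_nonempty_iff_eq_empty] at hc
        have hφid : φ u = .var u := by
          have : u ∉ φ.dom := by rw [hc]; exact Set.notMem_empty u
          exact not_not.mp this
        obtain ⟨w, hw1, hw2⟩ := apply_eq_var ((hφθ u).symm.trans hφid)
        have hwd : w ∉ θ.dom := hrel u w (by rw [hw1]; simp [Term.vars])
        have hφw : φ w = .var u := by
          rw [hφθ w, not_not.mp hwd]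
          exact hw2
        have hwu : w ≠ u := by
          rintro rfl
          exact hu hw1
        have : w ∈ φ.dom := by
          simp only [Subst.dom, Set.mem_setOf_eq, hφw]
          intro hcc
          injection hcc with h
          exact hwu h.symm
        rw [hc] at this
        exact this
      obtain ⟨u', hu'⟩ := hφdom
      refine ⟨u', ?_⟩
      have hempty' : Subst.occ φ u' = ∅ := by
        ext x
        simp only [Subst.occ, Set.mem_setOf_eq, Set.mem_empty_iff_false, iff_false]
        exact fun h => hrelφ x u' h hu'
      show φ.occ u' ∩ X = θ.occ u ∩ X
      rw [hempty, hempty']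
    · refine ⟨r u, ?_⟩
      have hocc : Subst.occ φ (r u) = Subst.occ θ u := by
        ext x
        simp only [Subst.occ, Set.mem_setOf_eq]
        rw [hvars x]
        constructor
        · rintro ⟨y, hy, he⟩
          rwa [← hinj y (hrel x y hy) u hu he]
        · intro h
          exact ⟨u, h, rfl⟩
      show φ.occ (r u) ∩ X = θ.occ u ∩ X
      rw [hocc]
  · -- var-to-var
    rintro x ⟨y, hxy⟩
    have hyd : y ∉ θ.dom := hrel x y (by rw [hxy]; simp [Term.vars])
    refine ⟨r y, ?_⟩
    rw [hφθ x, hxy]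
    exact hr1 y hyd
  · -- linearity
    intro x hφx
    rw [mult_le_one_iff] at hφx ⊢
    intro z
    have h := count_le_count_apply δ r (θ x) (fun y hy => hr1 y (hrel x y hy)) z
    rw [← hφθ x] at h
    exact le_trans h (hφx (r z))

end Aux

/-- any two idempotent mgus of `E` have the same models,
the same sharing abstraction, bind the same variables to variables,
and agree on linearity. -/
theorem stmt1 {F : ℕ → Type} (X : Set ℕ) (hX : X.Finite)
    (E : Set (Term F × Term F)) (hE : E.Finite)
    (θ φ : Subst F) (hθ : θ ∈ imgu E) (hφ : φ ∈ imgu E) :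
    (∀ M : Set ℕ, Subst.Models M θ ↔ Subst.Models M φ) ∧
    Subst.alphaSh X θ = Subst.alphaSh X φ ∧
    (∀ x : ℕ, (∃ y, θ x = Term.var y) ↔ (∃ y, φ x = Term.var y)) ∧
    (∀ x : ℕ, (θ x).mult ≤ 1 ↔ (φ x).mult ≤ 1) := by
  obtain ⟨⟨hθu, hθm⟩, hθid⟩ := hθ
  obtain ⟨⟨hφu, hφm⟩, hφid⟩ := hφ
  obtain ⟨δ, hδs, hδ⟩ := hθm φ hφu
  obtain ⟨δ', hδ's, hδ'⟩ := hφm θ hθu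
  have hφθ : ∀ x, φ x = δ.apply (θ x) := fun x => congrFun hδ x
  have hθφ : ∀ x, θ x = δ'.apply (φ x) := fun x => congrFun hδ' x
  obtain ⟨k1, k2, k3, k4⟩ := key X θ φ δ δ' hθid hφid hφθ hθφ
  obtain ⟨l1, l2, l3, l4⟩ := key X φ θ δ' δ hφid hθid hθφ hφθ
  exact ⟨fun M => ⟨k1 M, l1 M⟩, Set.Subset.antisymm k2 l2,
    fun x => ⟨k3 x, l3 x⟩, fun x => ⟨l4 x, k4 x⟩⟩

end SharingPaper
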